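/- If a gem (M, c) has more than 4 vertices and has some 2-edge cut, then it has a 2-edge cut both of whose edges are coloured yellow. -/

import Mathlib

/-- The three colours used in a gem. -/
inductive Colour : Type
  | red | yellow | blue
deriving DecidableEq

/-- A proper edge colouring of a graph: two distinct edges sharing an endpoint
receive different colours. -/
def ProperEdgeColouring {V : Type*} {α : Type*} (G : SimpleGraph V) (c : Sym2 V → α) : Prop :=
  ∀ e₁ ∈ G.edgeSet, ∀ e₂ ∈ G.edgeSet, e₁ ≠ e₂ → (∃ v, v ∈ e₁ ∧ v ∈ e₂) → c e₁ ≠ c e₂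

/-- A cubic graph: every vertex has degree 3. -/
def IsCubic {V : Type*} (G : SimpleGraph V) : Prop :=
  ∀ v : V, (G.neighborSet v).ncard = 3

/-- The edge cut determined by a vertex set `S`: the set of edges of `G`
with exactly one endpoint in `S`. -/
def edgeCut {V : Type*} (G : SimpleGraph V) (S : Set V) : Set (Sym2 V) :=
  {e | ∃ u v, e = s(u, v) ∧ G.Adj u v ∧ u ∈ S ∧ v ∉ S}

/-- The spanning subgraph of `G` formed by the edges coloured `x` or `y`. -/
def twoColourSubgraph {V : Type*} {α : Type*} (G : SimpleGraph V) (c : Sym2 V → α)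
    (x y : α) : SimpleGraph V where
  Adj u v := G.Adj u v ∧ (c s(u, v) = x ∨ c s(u, v) = y)
  symm := ⟨by
    intro u v h
    refine ⟨h.1.symm, ?_⟩
    rw [Sym2.eq_swap]
    exact h.2⟩
  loopless := ⟨fun v h => G.loopless.irrefl v h.1⟩

/-- A gem: a connected cubic graph with a proper 3-edge-colouring (red, yellow,
blue) such that every connected component of the spanning subgraph formed by
the red and blue edges is a cycle of length 4 (equivalently, for a simple
graph: that subgraph is 2-regular and each of its connected components has
exactly 4 vertices). -/
structure IsGem {V : Type*} (M : SimpleGraph V) (c : Sym2 V → Colour) : Prop where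
  connected : M.Connected
  cubic : IsCubic M
  proper : ProperEdgeColouring M c
  rb_two_regular : ∀ v : V,
    ((twoColourSubgraph M c Colour.red Colour.blue).neighborSet v).ncard = 2
  rb_components_card4 : ∀ v : V,
    ((twoColourSubgraph M c Colour.red Colour.blue).connectedComponentMk v).supp.ncard = 4


/-! ### Auxiliary material -/

instance : Fintype Colour :=
  ⟨{Colour.red, Colour.yellow, Colour.blue}, by intro x; cases x <;> simp⟩

section Aux

variable {V : Type*} [Fintype V] {M : SimpleGraph V} {c : Sym2 V → Colour}

lemma twoColourSubgraph_adj_iff {α : Type*} {G : SimpleGraph V} {c : Sym2 V → α} {x y : α}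
    {u v : V} :
    (twoColourSubgraph G c x y).Adj u v ↔ G.Adj u v ∧ (c s(u, v) = x ∨ c s(u, v) = y) :=
  Iff.rfl

lemma edgeCut_mem_iff {S : Set V} {e : Sym2 V} :
    e ∈ edgeCut M S ↔ ∃ u v, e = s(u, v) ∧ M.Adj u v ∧ u ∈ S ∧ v ∉ S := Iff.rfl

/-- Injectivity of colours of edges at a fixed vertex. -/
lemma colour_nbr_unique (hgem : IsGem M c) {v w w' : V} (h : M.Adj v w) (h' : M.Adj v w')
    (hc : c s(v, w) = c s(v, w')) : w = w' := by
  by_contra hne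
  have he : s(v, w) ≠ s(v, w') := by
    intro heq
    rcases Sym2.eq_iff.1 heq with ⟨-, h2⟩ | ⟨h1, -⟩
    · exact hne h2
    · exact h'.ne h1
  exact hgem.proper _ (M.mem_edgeSet.2 h) _ (M.mem_edgeSet.2 h') he
    ⟨v, Sym2.mem_mk_left v w, Sym2.mem_mk_left v w'⟩ hc

/-- Every vertex has a neighbour of each colour. -/
lemma exists_colour_nbr (hgem : IsGem M c) (v : V) (x : Colour) :
    ∃ w, M.Adj v w ∧ c s(v, w) = x := by
  have hinj : Set.InjOn (fun w => c s(v, w)) (M.neighborSet v) := by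
    intro w1 h1 w2 h2 heq
    exact colour_nbr_unique hgem h1 h2 heq
  have himg : ((fun w => c s(v, w)) '' (M.neighborSet v)).ncard = 3 := by
    rw [Set.ncard_image_of_injOn hinj, hgem.cubic v]
  have huniv : (fun w => c s(v, w)) '' (M.neighborSet v) = Set.univ := by
    refine Set.eq_of_subset_of_ncard_le (Set.subset_univ _) ?_ (Set.toFinite _)
    rw [himg, Set.ncard_univ, Nat.card_eq_fintype_card]
    decide
  have hx : x ∈ (fun w => c s(v, w)) '' (M.neighborSet v) := by
    rw [huniv]; exact Set.mem_univ x
  obtain ⟨w, hw, hcw⟩ := hx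
  exact ⟨w, hw, hcw⟩

/-- A finset with a fixed-point-free involution has even cardinality. -/
lemma even_card_of_invol {α : Type*} [DecidableEq α] :
    ∀ (n : ℕ) (s : Finset α), s.card = n → ∀ f : α → α,
      (∀ a ∈ s, f a ∈ s) → (∀ a ∈ s, f (f a) = a) → (∀ a ∈ s, f a ≠ a) → Even s.card := by
  intro n
  induction n using Nat.strong_induction_on with
  | _ n ih =>
    intro s hs f hmem hinv hne
    rcases s.eq_empty_or_nonempty with rfl | ⟨a, ha⟩
    · simp
    · have hfa : f a ∈ s := hmem a ha
      have hane : f a ≠ a := hne a ha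
      have hsub : ({a, f a} : Finset α) ⊆ s := by
        intro x hx
        rcases Finset.mem_insert.1 hx with rfl | hx
        · exact ha
        · rw [Finset.mem_singleton.1 hx]; exact hfa
      have hpair : ({a, f a} : Finset α).card = 2 := Finset.card_pair hane.symm
      have htcard : (s \ {a, f a}).card = s.card - 2 := by rw [Finset.card_sdiff_of_subset hsub, hpair]
      have hspos : 2 ≤ s.card := hpair ▸ Finset.card_le_card hsub
      have htmem : ∀ b ∈ s \ {a, f a}, b ∈ s ∧ b ≠ a ∧ b ≠ f a := by
        intro b hb
        have h' := Finset.mem_sdiff.1 hb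
        refine ⟨h'.1, ?_, ?_⟩
        · intro h; exact h'.2 (by simp [h])
        · intro h; exact h'.2 (by simp [h])
      have ht : Even (s \ {a, f a}).card := by
        refine ih (s \ {a, f a}).card ?_ _ rfl f ?_ ?_ ?_
        · omega
        · intro b hb
          obtain ⟨hbs, hba, hbfa⟩ := htmem b hb
          have h1 : f b ∈ s := hmem b hbs
          have h2 : f b ≠ a := by
            intro h
            exact hbfa (by rw [← h, hinv b hbs])
          have h3 : f b ≠ f a := by
            intro h
            apply hba
            rw [← hinv b hbs, h, hinv a ha]
          refine Finset.mem_sdiff.2 ⟨h1, ?_⟩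
          simp [h2, h3]
        · intro b hb; exact hinv b (htmem b hb).1
        · intro b hb; exact hne b (htmem b hb).1
      obtain ⟨k, hk⟩ := ht
      have : s.card = 2 * k + 2 := by omega
      exact ⟨k + 1, by omega⟩

/-- Parity lemma: the number of cut edges of a fixed colour has the same parity as `|S|`. -/
lemma cut_colour_parity (hgem : IsGem M c) (S : Set V) (x : Colour) :
    {e | e ∈ edgeCut M S ∧ c e = x}.ncard % 2 = S.ncard % 2 := by
  classical
  choose y hyadj hyc using fun v => exists_colour_nbr hgem v x
  have hyy : ∀ v, y (y v) = v := by
    intro v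
    refine colour_nbr_unique hgem (hyadj (y v)) (hyadj v).symm ?_
    rw [hyc (y v), Sym2.eq_swap, hyc v]
  have hyne : ∀ v, y v ≠ v := fun v => (hyadj v).ne'
  set F := S.toFinite.toFinset with hF
  have hFmem : ∀ v, v ∈ F ↔ v ∈ S := fun v => S.toFinite.mem_toFinset
  set A := F.filter (fun v => y v ∈ S) with hA
  set B := F.filter (fun v => y v ∉ S) with hB
  have hABF : A.card + B.card = F.card :=
    Finset.card_filter_add_card_filter_not _
  have hAeven : Even A.card := by
    refine even_card_of_invol A.card A rfl y ?_ ?_ ?_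
    · intro a haA
      obtain ⟨haF, hya⟩ := Finset.mem_filter.1 haA
      refine Finset.mem_filter.2 ⟨(hFmem _).2 hya, ?_⟩
      rw [hyy a]; exact (hFmem _).1 haF
    · intro a _; exact hyy a
    · intro a _; exact hyne a
  have himg : {e | e ∈ edgeCut M S ∧ c e = x} = (fun v => s(v, y v)) '' (B : Set V) := by
    ext e
    constructor
    · rintro ⟨⟨u, v, rfl, hadj, hu, hv⟩, hce⟩
      have hv' : v = y u := colour_nbr_unique hgem hadj (hyadj u) (hce.trans (hyc u).symm)
      refine ⟨u, ?_, by rw [hv']⟩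
      refine Finset.mem_coe.2 (Finset.mem_filter.2 ⟨(hFmem _).2 hu, ?_⟩)
      rw [← hv']; exact hv
    · rintro ⟨v, hvB, rfl⟩
      obtain ⟨hvF, hyv⟩ := Finset.mem_filter.1 (Finset.mem_coe.1 hvB)
      exact ⟨⟨v, y v, rfl, hyadj v, (hFmem _).1 hvF, hyv⟩, hyc v⟩
  have hinj : Set.InjOn (fun v => s(v, y v)) (B : Set V) := by
    intro v1 h1 v2 h2 heq
    obtain ⟨h1F, h1y⟩ := Finset.mem_filter.1 (Finset.mem_coe.1 h1)
    obtain ⟨h2F, h2y⟩ := Finset.mem_filter.1 (Finset.mem_coe.1 h2)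
    rcases Sym2.eq_iff.1 heq with ⟨h, -⟩ | ⟨h, -⟩
    · exact h
    · exact absurd ((hFmem _).1 h1F) (h ▸ h2y)
  have hcount : {e | e ∈ edgeCut M S ∧ c e = x}.ncard = B.card := by
    rw [himg, Set.ncard_image_of_injOn hinj, Set.ncard_coe_finset]
  have hScard : S.ncard = F.card := Set.ncard_eq_toFinset_card S S.toFinite
  obtain ⟨k, hk⟩ := hAeven
  rw [hcount, hScard]
  omega

/-- Extract the second element of a 2-element set containing a given element. -/
lemma pair_of_ncard_two {α : Type*} {t : Set α} (h : t.ncard = 2) {a : α} (ha : a ∈ t) :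
    ∃ b, b ≠ a ∧ t = {a, b} := by
  obtain ⟨u, v, huv, rfl⟩ := Set.ncard_eq_two.1 h
  rcases ha with rfl | ha
  · exact ⟨v, huv.symm, rfl⟩
  · rw [Set.mem_singleton_iff] at ha
    subst ha
    exact ⟨u, huv, Set.pair_comm u a⟩

lemma mem_edgeCut {S : Set V} {u v : V} (hadj : M.Adj u v) (hu : u ∈ S) (hv : v ∉ S) :
    s(u, v) ∈ edgeCut M S :=
  ⟨u, v, rfl, hadj, hu, hv⟩

/-- Decoding equality of cut edges: endpoints on matching sides coincide. -/
lemma cut_eq_decode {S : Set V} {u v a b : V} (h : s(u, v) = s(a, b))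
    (hu : u ∈ S) (_hv : v ∉ S) (_ha : a ∈ S) (hb : b ∉ S) : u = a ∧ v = b := by
  rcases Sym2.eq_iff.1 h with ⟨h1, h2⟩ | ⟨h1, h2⟩
  · exact ⟨h1, h2⟩
  · exact absurd hu (h1 ▸ hb)

/-- The key construction: if the two edges of a 2-edge cut have the same non-yellow
colour, then there is a 2-edge cut with both edges yellow. -/
lemma main_construction (hgem : IsGem M c) (S : Set V) (e1 e2 : Sym2 V)
    (hcuteq : edgeCut M S = {e1, e2}) (hne : e1 ≠ e2)
    (hcol : c e1 = c e2) (hnotY : c e1 ≠ Colour.yellow) :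
    ∃ (S' : Set V) (g1 g2 : Sym2 V), S'.Nonempty ∧ S'ᶜ.Nonempty ∧ g1 ≠ g2 ∧
      edgeCut M S' = {g1, g2} ∧ c g1 = Colour.yellow ∧ c g2 = Colour.yellow := by
  classical
  set H := twoColourSubgraph M c Colour.red Colour.blue with hHdef
  have hmem1 : e1 ∈ edgeCut M S := by rw [hcuteq]; exact Set.mem_insert _ _
  have hmem2 : e2 ∈ edgeCut M S := by rw [hcuteq]; exact Set.mem_insert_of_mem _ rfl
  obtain ⟨a1, b1, he1, hadj1, ha1, hb1⟩ := edgeCut_mem_iff.1 hmem1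
  obtain ⟨a2, b2, he2, hadj2, ha2, hb2⟩ := edgeCut_mem_iff.1 hmem2
  have he1E : e1 ∈ M.edgeSet := he1 ▸ M.mem_edgeSet.2 hadj1
  have he2E : e2 ∈ M.edgeSet := he2 ▸ M.mem_edgeSet.2 hadj2
  have hnotY2 : c e2 ≠ Colour.yellow := hcol ▸ hnotY
  -- the common colour is red or blue
  have hrb : c e1 = Colour.red ∨ c e1 = Colour.blue := by
    cases h : c e1
    · exact Or.inl rfl
    · exact absurd h hnotY
    · exact Or.inr rfl
  -- distinctness of the four endpoints
  have ha12 : a1 ≠ a2 := by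
    intro h
    subst h
    exact hgem.proper e1 he1E e2 he2E hne
      ⟨a1, he1 ▸ Sym2.mem_mk_left a1 b1, he2 ▸ Sym2.mem_mk_left a1 b2⟩ hcol
  have hb12 : b1 ≠ b2 := by
    intro h
    subst h
    exact hgem.proper e1 he1E e2 he2E hne
      ⟨b1, he1 ▸ Sym2.mem_mk_right a1 b1, he2 ▸ Sym2.mem_mk_right a2 b1⟩ hcol
  -- the cut edges are red/blue edges
  have hH1 : H.Adj a1 b1 := twoColourSubgraph_adj_iff.2 ⟨hadj1, by rw [← he1]; exact hrb⟩
  have hH2 : H.Adj a2 b2 := twoColourSubgraph_adj_iff.2 ⟨hadj2, by rw [← he2, ← hcol]; exact hrb⟩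
  -- second H-neighbour u1 of b1 and v1 of a1
  obtain ⟨u1, hu1ne, hNb1⟩ := pair_of_ncard_two (hgem.rb_two_regular b1)
    (by rw [SimpleGraph.mem_neighborSet]; exact hH1.symm : a1 ∈ H.neighborSet b1)
  have hHu1 : H.Adj b1 u1 := by
    rw [← SimpleGraph.mem_neighborSet, hNb1]
    exact Set.mem_insert_of_mem _ rfl
  obtain ⟨v1, hv1ne, hNa1⟩ := pair_of_ncard_two (hgem.rb_two_regular a1)
    (by rw [SimpleGraph.mem_neighborSet]; exact hH1 : b1 ∈ H.neighborSet a1)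
  have hHv1 : H.Adj a1 v1 := by
    rw [← SimpleGraph.mem_neighborSet, hNa1]
    exact Set.mem_insert_of_mem _ rfl
  -- u1 is outside S, v1 is inside S
  have hu1S : u1 ∉ S := by
    intro h
    have hc' := mem_edgeCut (twoColourSubgraph_adj_iff.1 hHu1).1.symm h hb1
    rw [hcuteq] at hc'
    rcases hc' with h' | h'
    · exact hu1ne (cut_eq_decode (h'.trans he1) h hb1 ha1 hb1).1
    · exact hb12 (cut_eq_decode ((Set.mem_singleton_iff.1 h').trans he2) h hb1 ha2 hb2).2
  have hv1S : v1 ∈ S := by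
    by_contra h
    have hc' := mem_edgeCut (twoColourSubgraph_adj_iff.1 hHv1).1 ha1 h
    rw [hcuteq] at hc'
    rcases hc' with h' | h'
    · exact hv1ne (cut_eq_decode (h'.trans he1) ha1 h ha1 hb1).2
    · exact ha12 (cut_eq_decode ((Set.mem_singleton_iff.1 h').trans he2) ha1 h ha2 hb2).1
  -- the four vertices of the component of b1
  have hb1a1 : b1 ≠ a1 := hH1.ne'
  have hb1u1 : b1 ≠ u1 := hHu1.ne
  have hb1v1 : b1 ≠ v1 := fun h => hv1ne h.symm
  have ha1u1 : a1 ≠ u1 := fun h => hu1ne h.symm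
  have ha1v1 : a1 ≠ v1 := hHv1.ne
  have hu1v1 : u1 ≠ v1 := fun h => hu1S (h ▸ hv1S)
  have memK : ∀ w : V, H.Reachable w b1 → w ∈ (H.connectedComponentMk b1).supp := by
    intro w h
    rw [SimpleGraph.ConnectedComponent.mem_supp_iff]
    exact SimpleGraph.ConnectedComponent.eq.2 h
  have hquadcard : ({b1, a1, u1, v1} : Set V).ncard = 4 := by
    rw [Set.ncard_insert_of_notMem (by simp [hb1a1, hb1u1, hb1v1]),
      Set.ncard_insert_of_notMem (by simp [ha1u1, ha1v1]),
      Set.ncard_insert_of_notMem (by simp [hu1v1]), Set.ncard_singleton]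
  have hsubK : ({b1, a1, u1, v1} : Set V) ⊆ (H.connectedComponentMk b1).supp := by
    intro w hw
    simp only [Set.mem_insert_iff, Set.mem_singleton_iff] at hw
    rcases hw with rfl | rfl | rfl | rfl
    · exact memK w (SimpleGraph.Reachable.refl w)
    · exact memK w hH1.reachable
    · exact memK w hHu1.symm.reachable
    · exact memK w (hHv1.symm.reachable.trans hH1.reachable)
  have hKeq : (H.connectedComponentMk b1).supp = {b1, a1, u1, v1} :=
    (Set.eq_of_subset_of_ncard_le hsubK
      (by rw [hgem.rb_components_card4 b1, hquadcard]) (Set.toFinite _)).symm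
  -- the second H-neighbour of u1 is v1, and the edge u1v1 must be e2
  obtain ⟨t, htne, hNu1⟩ := pair_of_ncard_two (hgem.rb_two_regular u1)
    (by rw [SimpleGraph.mem_neighborSet]; exact hHu1.symm : b1 ∈ H.neighborSet u1)
  have hHt : H.Adj u1 t := by
    rw [← SimpleGraph.mem_neighborSet, hNu1]
    exact Set.mem_insert_of_mem _ rfl
  have htK : t ∈ (H.connectedComponentMk b1).supp :=
    memK t (hHt.symm.reachable.trans hHu1.symm.reachable)
  rw [hKeq] at htK
  simp only [Set.mem_insert_iff, Set.mem_singleton_iff] at htK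
  have htv1 : t = v1 := by
    rcases htK with rfl | rfl | rfl | rfl
    · exact absurd rfl htne
    · exfalso
      have : u1 ∈ H.neighborSet t := by rw [SimpleGraph.mem_neighborSet]; exact hHt.symm
      rw [hNa1] at this
      rcases this with h' | h'
      · exact hb1u1 h'.symm
      · exact hu1v1 (Set.mem_singleton_iff.1 h')
    · exact absurd rfl hHt.ne
    · rfl
  subst htv1
  have hcross := mem_edgeCut (twoColourSubgraph_adj_iff.1 hHt.symm).1 hv1S hu1S
  rw [hcuteq] at hcross
  have hu1b2 : u1 = b2 := by
    rcases hcross with h' | h'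
    · exact absurd (cut_eq_decode (h'.trans he1) hv1S hu1S ha1 hb1).1.symm ha1v1
    · exact (cut_eq_decode ((Set.mem_singleton_iff.1 h').trans he2) hv1S hu1S ha2 hb2).2
  have hHb1b2 : H.Adj b1 b2 := hu1b2 ▸ hHu1
  -- yellow neighbours of b1 and b2
  obtain ⟨w1, hw1adj, hw1c⟩ := exists_colour_nbr hgem b1 Colour.yellow
  obtain ⟨w2, hw2adj, hw2c⟩ := exists_colour_nbr hgem b2 Colour.yellow
  have hw1S : w1 ∉ S := by
    intro h
    have hc' := mem_edgeCut hw1adj.symm h hb1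
    rw [hcuteq] at hc'
    rcases hc' with h' | h'
    · exact hnotY (by rw [← h', Sym2.eq_swap]; exact hw1c)
    · exact hnotY2 (by rw [← Set.mem_singleton_iff.1 h', Sym2.eq_swap]; exact hw1c)
  have hw2S : w2 ∉ S := by
    intro h
    have hc' := mem_edgeCut hw2adj.symm h hb2
    rw [hcuteq] at hc'
    rcases hc' with h' | h'
    · exact hnotY (by rw [← h', Sym2.eq_swap]; exact hw2c)
    · exact hnotY2 (by rw [← Set.mem_singleton_iff.1 h', Sym2.eq_swap]; exact hw2c)
  have hw1b2 : w1 ≠ b2 := by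
    intro h
    have hyel : c s(b1, b2) = Colour.yellow := by rw [← h]; exact hw1c
    rcases (twoColourSubgraph_adj_iff.1 hHb1b2).2 with h' | h' <;> rw [hyel] at h' <;> simp at h'
  have hw2b1 : w2 ≠ b1 := by
    intro h
    have hyel : c s(b1, b2) = Colour.yellow := by rw [Sym2.eq_swap, ← h]; exact hw2c
    rcases (twoColourSubgraph_adj_iff.1 hHb1b2).2 with h' | h' <;> rw [hyel] at h' <;> simp at h'
  have hw1b1 : w1 ≠ b1 := hw1adj.ne'
  have hw2b2 : w2 ≠ b2 := hw2adj.ne'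
  -- the new cut
  refine ⟨S ∪ {b1, b2}, s(b1, w1), s(b2, w2), ⟨a1, Or.inl ha1⟩, ?_, ?_, ?_, hw1c, hw2c⟩
  · exact ⟨w1, by simp [hw1S, hw1b1, hw1b2]⟩
  · intro h
    rcases Sym2.eq_iff.1 h with ⟨h1, -⟩ | ⟨h1, -⟩
    · exact hb12 h1
    · exact hw2b1 h1.symm
  · -- edgeCut M (S ∪ {b1, b2}) = {s(b1, w1), s(b2, w2)}
    have hNb1M : M.neighborSet b1 = {w1, a1, b2} := by
      refine (Set.eq_of_subset_of_ncard_le ?_ ?_ (Set.toFinite _)).symm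
      · intro w hw
        simp only [Set.mem_insert_iff, Set.mem_singleton_iff] at hw
        rw [SimpleGraph.mem_neighborSet]
        rcases hw with rfl | rfl | rfl
        · exact hw1adj
        · exact hadj1.symm
        · exact (twoColourSubgraph_adj_iff.1 hHb1b2).1
      · rw [hgem.cubic b1,
          Set.ncard_insert_of_notMem (by simp [show w1 ≠ a1 from fun h => hw1S (h ▸ ha1), hw1b2]),
          Set.ncard_insert_of_notMem (by simp [show a1 ≠ b2 from fun h => hb2 (h ▸ ha1)]),
          Set.ncard_singleton]
    have hNb2M : M.neighborSet b2 = {w2, a2, b1} := by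
      refine (Set.eq_of_subset_of_ncard_le ?_ ?_ (Set.toFinite _)).symm
      · intro w hw
        simp only [Set.mem_insert_iff, Set.mem_singleton_iff] at hw
        rw [SimpleGraph.mem_neighborSet]
        rcases hw with rfl | rfl | rfl
        · exact hw2adj
        · exact hadj2.symm
        · exact (twoColourSubgraph_adj_iff.1 hHb1b2.symm).1
      · rw [hgem.cubic b2,
          Set.ncard_insert_of_notMem (by simp [show w2 ≠ a2 from fun h => hw2S (h ▸ ha2), hw2b1]),
          Set.ncard_insert_of_notMem (by simp [show a2 ≠ b1 from fun h => hb1 (h ▸ ha2)]),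
          Set.ncard_singleton]
    ext e
    constructor
    · rintro ⟨u, v, rfl, hadj, hu, hv⟩
      have hvS : v ∉ S := fun h => hv (Or.inl h)
      have hvb1 : v ≠ b1 := fun h => hv (Or.inr (by simp [h]))
      have hvb2 : v ≠ b2 := fun h => hv (Or.inr (by simp [h]))
      rcases hu with huS | hu12
      · exfalso
        have hc' := mem_edgeCut hadj huS hvS
        rw [hcuteq] at hc'
        rcases hc' with h' | h'
        · exact hvb1 (cut_eq_decode (h'.trans he1) huS hvS ha1 hb1).2
        · exact hvb2 (cut_eq_decode ((Set.mem_singleton_iff.1 h').trans he2) huS hvS ha2 hb2).2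
      · simp only [Set.mem_insert_iff, Set.mem_singleton_iff] at hu12
        rcases hu12 with rfl | rfl
        · have : v ∈ M.neighborSet u := by rw [SimpleGraph.mem_neighborSet]; exact hadj
          rw [hNb1M] at this
          simp only [Set.mem_insert_iff, Set.mem_singleton_iff] at this
          rcases this with rfl | rfl | rfl
          · exact Set.mem_insert _ _
          · exact absurd (Or.inl ha1) hv
          · exact absurd rfl hvb2
        · have : v ∈ M.neighborSet u := by rw [SimpleGraph.mem_neighborSet]; exact hadj
          rw [hNb2M] at this
          simp only [Set.mem_insert_iff, Set.mem_singleton_iff] at this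
          rcases this with rfl | rfl | rfl
          · exact Set.mem_insert_of_mem _ rfl
          · exact absurd (Or.inl ha2) hv
          · exact absurd rfl hvb1
    · intro h
      rcases h with h | h
      · rw [h]
        exact mem_edgeCut hw1adj (Or.inr (Set.mem_insert _ _))
          (by simp [hw1S, hw1b1, hw1b2])
      · rw [Set.mem_singleton_iff.1 h]
        exact mem_edgeCut hw2adj (Or.inr (Set.mem_insert_of_mem _ rfl))
          (by simp [hw2S, hw2b1, hw2b2])

end Aux

/-- If a gem has more than 4 vertices and has some 2-edge cut, then it has a
2-edge cut both of whose edges are coloured yellow. -/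
theorem gem_yellow_two_edge_cut {V : Type*} [Fintype V]
    (M : SimpleGraph V) (c : Sym2 V → Colour) (hgem : IsGem M c)
    (hcard : 4 < Fintype.card V)
    (hcut : ∃ S : Set V, S.Nonempty ∧ Sᶜ.Nonempty ∧ (edgeCut M S).ncard = 2) :
    ∃ (S : Set V) (g1 g2 : Sym2 V), S.Nonempty ∧ Sᶜ.Nonempty ∧ g1 ≠ g2 ∧
      edgeCut M S = {g1, g2} ∧ c g1 = Colour.yellow ∧ c g2 = Colour.yellow := by
  obtain ⟨S, hSne, hScne, h2⟩ := hcut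
  obtain ⟨e1, e2, hne, hcuteq⟩ := Set.ncard_eq_two.1 h2
  by_cases hcc : c e1 = c e2
  · by_cases hY : c e1 = Colour.yellow
    · exact ⟨S, e1, e2, hSne, hScne, hne, hcuteq, hY, hcc.symm.trans hY⟩
    · exact main_construction hgem S e1 e2 hcuteq hne hcc hY
  · exfalso
    have hthird : ∃ z : Colour, z ≠ c e1 ∧ z ≠ c e2 := by
      revert hcc; generalize c e1 = a; generalize c e2 = b; revert b; revert a; decide
    obtain ⟨z, hz1, hz2⟩ := hthird
    have h1 : {e | e ∈ edgeCut M S ∧ c e = c e1}.ncard = 1 := by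
      have heq : {e | e ∈ edgeCut M S ∧ c e = c e1} = {e1} := by
        ext e
        simp only [hcuteq, Set.mem_insert_iff, Set.mem_singleton_iff, Set.mem_setOf_eq]
        constructor
        · rintro ⟨rfl | rfl, h⟩
          · rfl
          · exact absurd h.symm hcc
        · rintro rfl; exact ⟨Or.inl rfl, rfl⟩
      rw [heq, Set.ncard_singleton]
    have h0 : {e | e ∈ edgeCut M S ∧ c e = z}.ncard = 0 := by
      have heq : {e | e ∈ edgeCut M S ∧ c e = z} = ∅ := by
        ext e
        simp only [hcuteq, Set.mem_insert_iff, Set.mem_singleton_iff, Set.mem_setOf_eq,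
          Set.mem_empty_iff_false, iff_false, not_and]
        rintro (rfl | rfl) h
        · exact hz1 h.symm
        · exact hz2 h.symm
      rw [heq, Set.ncard_empty]
    have p1 := cut_colour_parity hgem S (c e1)
    have p0 := cut_colour_parity hgem S z
    rw [h1] at p1
    rw [h0] at p0
    omega
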